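/- The island-coalescence equilibrium pressure balances the Lorentz force: for every (x,y) ∈ ℝ², ∂x p(x,y) = −j(x,y)·(k·sin(2πx)/D(x,y)) and ∂y p(x,y) = j(x,y)·(sinh(2πy)/D(x,y)), where j(x,y) = 2π·(k² − 1)/D(x,y)² is the scalar curl of B0. Equivalently, ∂x p(x,y) = 2πk·(1 − k²)·sin(2πx)/D(x,y)³ and ∂y p(x,y) = 2π·(k² − 1)·sinh(2πy)/D(x,y)³, so ∇p = (curl B0) × B0 and the stationary momentum equation holds with zero velocity and zero body force. -/

import Mathlib

open Real

/-- Island coalescence: the equilibrium pressure `p = ((1−k²)/2)(1 + 1/D²)` balances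
the Lorentz force: `∇p = (curl B0) × B0 = (−j·B0₂, j·B0₁)` with
`j(x,y) = 2π(k² − 1)/D(x,y)²`; equivalently,
`∂x p = 2πk(1−k²)·sin(2πx)/D³` and `∂y p = 2π(k²−1)·sinh(2πy)/D³`. -/
theorem island_pressure_balances_lorentz
    (k : ℝ) (hk0 : 0 < k) (hk1 : k < 1)
    (D : ℝ → ℝ → ℝ) (p j : ℝ → ℝ → ℝ)
    (hD : ∀ x y : ℝ, D x y = Real.cosh (2 * π * y) + k * Real.cos (2 * π * x))
    (hp : ∀ x y : ℝ, p x y = ((1 - k ^ 2) / 2) * (1 + 1 / (D x y) ^ 2))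
    (hj : ∀ x y : ℝ, j x y = 2 * π * (k ^ 2 - 1) / (D x y) ^ 2) :
    ∀ x y : ℝ,
      (deriv (fun x' : ℝ => p x' y) x = -(j x y) * (k * Real.sin (2 * π * x) / D x y)) ∧
      (deriv (fun y' : ℝ => p x y') y = j x y * (Real.sinh (2 * π * y) / D x y)) ∧
      (deriv (fun x' : ℝ => p x' y) x
        = 2 * π * k * (1 - k ^ 2) * Real.sin (2 * π * x) / (D x y) ^ 3) ∧
      (deriv (fun y' : ℝ => p x y') y
        = 2 * π * (k ^ 2 - 1) * Real.sinh (2 * π * y) / (D x y) ^ 3) := by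
  have hDpos : ∀ a b : ℝ, 0 < D a b := by
    intro a b
    rw [hD]
    have h1 : (1:ℝ) ≤ Real.cosh (2 * π * b) := Real.one_le_cosh _
    nlinarith [Real.neg_one_le_cos (2 * π * a)]
  intro x y
  have hDne : D x y ≠ 0 := (hDpos x y).ne'
  -- derivative of inner linear map
  have hlin : ∀ t : ℝ, HasDerivAt (fun s : ℝ => 2 * π * s) (2 * π) t := by
    intro t
    simpa using (hasDerivAt_id t).const_mul (2 * π)
  -- x-derivative
  have hgx : HasDerivAt (fun x' : ℝ => Real.cosh (2 * π * y) + k * Real.cos (2 * π * x'))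
      (k * (-Real.sin (2 * π * x) * (2 * π))) x := by
    exact (((Real.hasDerivAt_cos (2 * π * x)).comp x (hlin x)).const_mul k).const_add _
  have hgx2 : HasDerivAt (fun x' : ℝ => (Real.cosh (2 * π * y) + k * Real.cos (2 * π * x')) ^ 2)
      (2 * (D x y) ^ 1 * (k * (-Real.sin (2 * π * x) * (2 * π)))) x := by
    have := hgx.fun_pow 2
    simpa [hD] using this
  have hDne2 : (D x y) ^ 2 ≠ 0 := pow_ne_zero _ hDne
  have hinv : HasDerivAt
      (fun x' : ℝ => ((Real.cosh (2 * π * y) + k * Real.cos (2 * π * x')) ^ 2)⁻¹)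
      (-(2 * (D x y) ^ 1 * (k * (-Real.sin (2 * π * x) * (2 * π)))) / ((D x y) ^ 2) ^ 2) x := by
    have := hgx2.fun_inv (by rw [← hD x y]; exact hDne2)
    simpa [hD] using this
  have hpx : HasDerivAt (fun x' : ℝ => p x' y)
      (((1 - k ^ 2) / 2) * (-(2 * (D x y) ^ 1 * (k * (-Real.sin (2 * π * x) * (2 * π)))) / ((D x y) ^ 2) ^ 2)) x := by
    have h := ((hinv.const_add (1:ℝ)).const_mul ((1 - k ^ 2) / 2))
    refine h.congr_of_eventuallyEq ?_
    filter_upwards with t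
    rw [hp, hD, one_div]
  -- y-derivative
  have hgy : HasDerivAt (fun y' : ℝ => Real.cosh (2 * π * y') + k * Real.cos (2 * π * x))
      (Real.sinh (2 * π * y) * (2 * π)) y := by
    exact ((Real.hasDerivAt_cosh (2 * π * y)).comp y (hlin y)).add_const _
  have hgy2 : HasDerivAt (fun y' : ℝ => (Real.cosh (2 * π * y') + k * Real.cos (2 * π * x)) ^ 2)
      (2 * (D x y) ^ 1 * (Real.sinh (2 * π * y) * (2 * π))) y := by
    have := hgy.fun_pow 2
    simpa [hD] using this
  have hinvy : HasDerivAt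
      (fun y' : ℝ => ((Real.cosh (2 * π * y') + k * Real.cos (2 * π * x)) ^ 2)⁻¹)
      (-(2 * (D x y) ^ 1 * (Real.sinh (2 * π * y) * (2 * π))) / ((D x y) ^ 2) ^ 2) y := by
    have := hgy2.fun_inv (by rw [← hD x y]; exact hDne2)
    simpa [hD] using this
  have hpy : HasDerivAt (fun y' : ℝ => p x y')
      (((1 - k ^ 2) / 2) * (-(2 * (D x y) ^ 1 * (Real.sinh (2 * π * y) * (2 * π))) / ((D x y) ^ 2) ^ 2)) y := by
    have h := ((hinvy.const_add (1:ℝ)).const_mul ((1 - k ^ 2) / 2))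
    refine h.congr_of_eventuallyEq ?_
    filter_upwards with t
    rw [hp, hD, one_div]
  rw [hpx.deriv, hpy.deriv, hj]
  refine ⟨?_, ?_, ?_, ?_⟩ <;> field_simp <;> ring
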